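/- Under the PD payoff assumptions, for all x, y > 0 with Δ_θ ≤ x/(x+y) < Δ_τ, we have F_θ(x,y) < F_τ(x,y), where F_θ(x,y) = (x/(x+y))π(C,C) + (y/(x+y))((1/2)π(C,D) + (1/2)π(D,D)) and F_τ(x,y) = (x/(x+y))((1/2)π(D,D) + (1/2)π(D,C)) + (y/(x+y))π(D,D). -/

import Mathlib

theorem stmt3 (πDC πCC πDD πCD α : ℝ)
    (h1 : πDC > πCC) (h2 : πCC > πDD) (h3 : πDD > πCD)
    (hα : α > πDC - πCC) :
    ∀ x y : ℝ, 0 < x → 0 < y →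
      (πDD - πCD) / (πCC + α - πCD) ≤ x / (x + y) →
      x / (x + y) < (πDD - πCD) / (πCC - πCD) →
      (x / (x + y)) * πCC + (y / (x + y)) * ((1/2) * πCD + (1/2) * πDD) <
      (x / (x + y)) * ((1/2) * πDD + (1/2) * πDC) + (y / (x + y)) * πDD := by
  intro x y hx hy _ hlt
  have hs : (0:ℝ) < x + y := by linarith
  have hp : 0 < x / (x + y) := div_pos hx hs
  have hq : y / (x + y) = 1 - x / (x + y) := by field_simp; ring
  have hcc : (0:ℝ) < πCC - πCD := by linarith
  have hkey : x / (x + y) * (πCC - πCD) < πDD - πCD := by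
    rw [div_mul_eq_mul_div, div_lt_iff₀ hs]
    rw [div_lt_div_iff₀ hs hcc] at hlt
    nlinarith
  rw [hq]
  nlinarith [mul_pos hp (sub_pos.mpr h1)]
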